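/- The Kullback–Leibler divergence of the inverse Gaussian distribution IG(μ₁,λ) from IG(μ₂,λ) equals λ(μ₁-μ₂)²/(2μ₁μ₂²). -/

import Mathlib

open MeasureTheory Set Real

noncomputable def phi (a b x : ℝ) : ℝ := Real.sqrt b * Real.sqrt x - Real.sqrt a / Real.sqrt x
noncomputable def phi' (a b x : ℝ) : ℝ := Real.sqrt b / (2 * Real.sqrt x) + Real.sqrt a / (2 * x * Real.sqrt x)

lemma phi_sq (a b : ℝ) (ha : 0 ≤ a) (hb : 0 ≤ b) {x : ℝ} (hx : 0 < x) :
    (phi a b x) ^ 2 = b * x + a / x - 2 * Real.sqrt (a * b) := by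
  have hsx := Real.sqrt_pos.2 hx
  have h1 : Real.sqrt b ^ 2 = b := Real.sq_sqrt hb
  have h2 : Real.sqrt a ^ 2 = a := Real.sq_sqrt ha
  have h3 : Real.sqrt x ^ 2 = x := Real.sq_sqrt hx.le
  have h4 : Real.sqrt (a * b) = Real.sqrt a * Real.sqrt b := Real.sqrt_mul ha b
  unfold phi
  have h3' : Real.sqrt x * Real.sqrt x = x := Real.mul_self_sqrt hx.le
  field_simp
  rw [h3, mul_comm b a, h4]
  linear_combination x^3*h1 + x*h2

lemma phi_hasDeriv (a b : ℝ) {x : ℝ} (hx : 0 < x) :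
    HasDerivAt (phi a b) (phi' a b x) x := by
  have hsx := Real.sqrt_pos.2 hx
  have h1 : HasDerivAt Real.sqrt (1 / (2 * Real.sqrt x)) x := Real.hasDerivAt_sqrt hx.ne'
  have h2 := ((hasDerivAt_const x (Real.sqrt a)).div h1 hsx.ne')
  have h3 := (h1.const_mul (Real.sqrt b)).sub h2
  refine h3.congr_deriv ?_
  have h4 : Real.sqrt x ^ 2 = x := Real.sq_sqrt hx.le
  unfold phi'
  field_simp
  ring_nf
  linear_combination (-Real.sqrt a) * h4

lemma phi_strictMono (a b : ℝ) (ha : 0 < a) (hb : 0 < b) : StrictMonoOn (phi a b) (Ioi 0) := by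
  intro x hx y hy hxy
  have hx0 : (0:ℝ) < x := hx
  have hy0 : (0:ℝ) < y := hy
  have hsx := Real.sqrt_pos.2 hx0
  have hsy := Real.sqrt_pos.2 hy0
  have hsa := Real.sqrt_pos.2 ha
  have hsb := Real.sqrt_pos.2 hb
  have hss : Real.sqrt x < Real.sqrt y := Real.sqrt_lt_sqrt hx0.le hxy
  unfold phi
  have h1 : Real.sqrt b * Real.sqrt x < Real.sqrt b * Real.sqrt y := by
    exact (mul_lt_mul_iff_right₀ hsb).2 hss
  have h2 : Real.sqrt a / Real.sqrt y < Real.sqrt a / Real.sqrt x :=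
    div_lt_div_of_pos_left hsa hsx hss
  linarith

lemma phi_surj (a b : ℝ) (ha : 0 < a) (hb : 0 < b) : phi a b '' (Ioi 0) = univ := by
  have hsa := Real.sqrt_pos.2 ha
  have hsb := Real.sqrt_pos.2 hb
  ext u
  simp only [mem_univ, iff_true, mem_image]
  set s := Real.sqrt (u^2 + 4*(Real.sqrt a * Real.sqrt b)) with hs
  have hsnn : 0 ≤ u^2 + 4*(Real.sqrt a * Real.sqrt b) := by positivity
  have hs2 : s^2 = u^2 + 4*(Real.sqrt a * Real.sqrt b) := Real.sq_sqrt hsnn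
  have hsu : -u < s := by
    have h1 : u^2 < s^2 := by nlinarith
    nlinarith [Real.sqrt_nonneg (u^2 + 4*(Real.sqrt a * Real.sqrt b)), sq_nonneg (s+u), sq_nonneg (s-u)]
  set t := (u + s) / (2 * Real.sqrt b) with ht
  have htpos : 0 < t := by
    apply div_pos (by linarith) (by linarith)
  refine ⟨t^2, pow_pos htpos 2, ?_⟩
  have hst : Real.sqrt (t^2) = t := Real.sqrt_sq htpos.le
  unfold phi
  rw [hst]
  have htne := htpos.ne'
  have ht2 : t * (2 * Real.sqrt b) = u + s := by
    rw [ht]; field_simp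
  field_simp
  have h4 : (4*Real.sqrt b) * ((Real.sqrt b*t*t - Real.sqrt a) - u*t) = 0 := by
    have hinv : Real.sqrt b * (Real.sqrt b)⁻¹ = 1 := mul_inv_cancel₀ hsb.ne'
    linear_combination (t*(2*Real.sqrt b)+u+s+2*u)*ht2 + hs2 - 4*u*(s+u)*hinv
  rcases mul_eq_zero.mp h4 with h | h
  · linarith
  · linarith

lemma phi'_pos (a b : ℝ) (ha : 0 < a) (hb : 0 < b) {x : ℝ} (hx : 0 < x) : 0 < phi' a b x := by
  have hsx := Real.sqrt_pos.2 hx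
  have hsa := Real.sqrt_pos.2 ha
  have hsb := Real.sqrt_pos.2 hb
  unfold phi'
  positivity

lemma lemL (a b : ℝ) (ha : 0 < a) (hb : 0 < b) :
    ∫ x in Ioi (0:ℝ), phi' a b x * Real.exp (-(a/x + b*x))
      = Real.sqrt π * Real.exp (-(2*Real.sqrt (a*b))) := by
  have hderiv : ∀ x ∈ Ioi (0:ℝ), HasDerivWithinAt (phi a b) (phi' a b x) (Ioi 0) x :=
    fun x hx => (phi_hasDeriv a b hx).hasDerivWithinAt
  have cov := integral_image_eq_integral_abs_deriv_smul measurableSet_Ioi hderiv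
    ((phi_strictMono a b ha hb).injOn) (fun u => Real.exp (-(u^2)))
  rw [phi_surj a b ha hb, Measure.restrict_univ] at cov
  have hgauss : ∫ u : ℝ, Real.exp (-(u^2)) = Real.sqrt π := by
    have := integral_gaussian 1
    simpa using this
  rw [hgauss] at cov
  have hcongr : ∫ x in Ioi (0:ℝ), |phi' a b x| • Real.exp (-(phi a b x)^2)
      = ∫ x in Ioi (0:ℝ), (phi' a b x * Real.exp (-(a/x + b*x))) * Real.exp (2*Real.sqrt (a*b)) := by
    apply setIntegral_congr_fun measurableSet_Ioi
    intro x hx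
    have hx0 : (0:ℝ) < x := hx
    dsimp only
    rw [smul_eq_mul, abs_of_pos (phi'_pos a b ha hb hx0), phi_sq a b ha.le hb.le hx0]
    rw [show -(b*x + a/x - 2*Real.sqrt (a*b)) = -(a/x + b*x) + 2*Real.sqrt (a*b) by ring,
      Real.exp_add]
    ring
  rw [hcongr, integral_mul_const] at cov
  have hepos : (0:ℝ) < Real.exp (2*Real.sqrt (a*b)) := Real.exp_pos _
  rw [cov, mul_assoc, ← Real.exp_add]
  simp

lemma lemInt (a b : ℝ) (ha : 0 < a) (hb : 0 < b) :
    IntegrableOn (fun x => phi' a b x * Real.exp (-(a/x + b*x))) (Ioi (0:ℝ)) := by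
  have hderiv : ∀ x ∈ Ioi (0:ℝ), HasDerivWithinAt (phi a b) (phi' a b x) (Ioi 0) x :=
    fun x hx => (phi_hasDeriv a b hx).hasDerivWithinAt
  have h := (integrableOn_image_iff_integrableOn_abs_deriv_smul measurableSet_Ioi hderiv
    ((phi_strictMono a b ha hb).injOn) (fun u => Real.exp (-(u^2))))
  rw [phi_surj a b ha hb] at h
  have hg : IntegrableOn (fun u : ℝ => Real.exp (-(u^2))) univ := by
    rw [integrableOn_univ]
    have := integrable_exp_neg_mul_sq (b := 1) one_pos
    simpa using this
  have h2 := h.1 hg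
  have h3 : IntegrableOn (fun x => (phi' a b x * Real.exp (-(a/x + b*x))) * Real.exp (2*Real.sqrt (a*b))) (Ioi (0:ℝ)) := by
    apply h2.congr_fun _ measurableSet_Ioi
    intro x hx
    have hx0 : (0:ℝ) < x := hx
    dsimp only
    rw [smul_eq_mul, abs_of_pos (phi'_pos a b ha hb hx0), phi_sq a b ha.le hb.le hx0]
    rw [show -(b*x + a/x - 2*Real.sqrt (a*b)) = -(a/x + b*x) + 2*Real.sqrt (a*b) by ring,
      Real.exp_add]
    ring
  have h4 : IntegrableOn (fun x => phi' a b x * Real.exp (-(a/x + b*x)) * Real.exp (2*Real.sqrt (a*b)) * Real.exp (-(2*Real.sqrt (a*b)))) (Ioi (0:ℝ)) :=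
    h3.mul_const (Real.exp (-(2*Real.sqrt (a*b))))
  apply h4.congr_fun _ measurableSet_Ioi
  intro x hx
  dsimp only
  have he : Real.exp (2*Real.sqrt (a*b)) * Real.exp (-(2*Real.sqrt (a*b))) = 1 := by
    rw [← Real.exp_add]; simp
  rw [mul_assoc, he, mul_one]

lemma contE (a b : ℝ) : ContinuousOn (fun x : ℝ => Real.exp (-(a/x + b*x))) (Ioi 0) := by
  apply Real.continuous_exp.comp_continuousOn
  apply ContinuousOn.neg
  apply ContinuousOn.add
  · exact continuousOn_const.div continuousOn_id (fun x hx => ne_of_gt hx)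
  · exact (continuous_const.mul continuous_id).continuousOn

lemma intI (a b : ℝ) (ha : 0 < a) (hb : 0 < b) :
    IntegrableOn (fun x => Real.exp (-(a/x + b*x)) / Real.sqrt x) (Ioi (0:ℝ)) := by
  have hsb := Real.sqrt_pos.2 hb
  have hg := (lemInt a b ha hb).const_mul (2 / Real.sqrt b)
  apply Integrable.mono hg
  · apply ContinuousOn.aestronglyMeasurable _ measurableSet_Ioi
    exact (contE a b).div (Real.continuous_sqrt.continuousOn) (fun x hx => (Real.sqrt_pos.2 hx).ne')
  · rw [ae_restrict_iff' measurableSet_Ioi]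
    filter_upwards with x hx
    have hx0 : (0:ℝ) < x := hx
    have hsx := Real.sqrt_pos.2 hx0
    have hsa := Real.sqrt_pos.2 ha
    have hE : (0:ℝ) < Real.exp (-(a/x + b*x)) := Real.exp_pos _
    have hphi : 0 < phi' a b x := by unfold phi'; positivity
    rw [Real.norm_eq_abs, Real.norm_eq_abs, abs_of_pos (by positivity), abs_of_pos (by positivity)]
    unfold phi'
    have key : 2 / Real.sqrt b * ((Real.sqrt b/(2*Real.sqrt x) + Real.sqrt a/(2*x*Real.sqrt x)) * Real.exp (-(a/x + b*x)))
        = Real.exp (-(a/x + b*x))/Real.sqrt x + (Real.sqrt a/(Real.sqrt b*(x*Real.sqrt x))) * Real.exp (-(a/x + b*x)) := by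
      field_simp
    rw [key]
    have hnn : 0 ≤ (Real.sqrt a/(Real.sqrt b*(x*Real.sqrt x))) * Real.exp (-(a/x + b*x)) := by positivity
    linarith

lemma intJ (a b : ℝ) (ha : 0 < a) (hb : 0 < b) :
    IntegrableOn (fun x => Real.exp (-(a/x + b*x)) / (x * Real.sqrt x)) (Ioi (0:ℝ)) := by
  have hsa := Real.sqrt_pos.2 ha
  have hg := (lemInt a b ha hb).const_mul (2 / Real.sqrt a)
  apply Integrable.mono hg
  · apply ContinuousOn.aestronglyMeasurable _ measurableSet_Ioi
    apply (contE a b).div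
    · exact (continuous_id.mul Real.continuous_sqrt).continuousOn
    · intro x hx
      have hx0 : (0:ℝ) < x := hx
      have hsx := Real.sqrt_pos.2 hx0
      positivity
  · rw [ae_restrict_iff' measurableSet_Ioi]
    filter_upwards with x hx
    have hx0 : (0:ℝ) < x := hx
    have hsx := Real.sqrt_pos.2 hx0
    have hsb := Real.sqrt_pos.2 hb
    have hE : (0:ℝ) < Real.exp (-(a/x + b*x)) := Real.exp_pos _
    have hphi : 0 < phi' a b x := by unfold phi'; positivity
    rw [Real.norm_eq_abs, Real.norm_eq_abs, abs_of_pos (by positivity), abs_of_pos (by positivity)]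
    unfold phi'
    have key : 2 / Real.sqrt a * ((Real.sqrt b/(2*Real.sqrt x) + Real.sqrt a/(2*x*Real.sqrt x)) * Real.exp (-(a/x + b*x)))
        = Real.exp (-(a/x + b*x))/(x*Real.sqrt x) + (Real.sqrt b/(Real.sqrt a*Real.sqrt x)) * Real.exp (-(a/x + b*x)) := by
      field_simp
      ring
    rw [key]
    have hnn : 0 ≤ (Real.sqrt b/(Real.sqrt a*Real.sqrt x)) * Real.exp (-(a/x + b*x)) := by positivity
    linarith

lemma lemSwap (a b : ℝ) (ha : 0 < a) (hb : 0 < b) :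
    ∫ x in Ioi (0:ℝ), Real.exp (-(a/x + b*x)) / (x * Real.sqrt x)
      = Real.sqrt b / Real.sqrt a * ∫ x in Ioi (0:ℝ), Real.exp (-(a/x + b*x)) / Real.sqrt x := by
  have hsa := Real.sqrt_pos.2 ha
  have hsb := Real.sqrt_pos.2 hb
  set f : ℝ → ℝ := fun x => a / (b * x) with hf
  set f' : ℝ → ℝ := fun x => -(a * b) / (b * x) ^ 2 with hf'
  have hderiv : ∀ x ∈ Ioi (0:ℝ), HasDerivWithinAt f (f' x) (Ioi 0) x := by
    intro x hx
    have hx0 : (0:ℝ) < x := hx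
    have h := (hasDerivAt_const x a).div ((hasDerivAt_id x).const_mul b) (by positivity)
    refine h.hasDerivWithinAt.congr_deriv ?_
    simp [hf']
  have hinj : InjOn f (Ioi 0) := by
    intro x hx y hy hxy
    have hx0 : (0:ℝ) < x := hx
    have hy0 : (0:ℝ) < y := hy
    rw [hf] at hxy
    rw [div_eq_div_iff (by positivity) (by positivity)] at hxy
    have h2 : a*b*x = a*b*y := by linarith [hxy]
    exact mul_left_cancel₀ (by positivity : a*b ≠ 0) h2
  have himg : f '' (Ioi 0) = Ioi 0 := by
    ext y
    constructor
    · rintro ⟨x, hx, rfl⟩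
      have hx0 : (0:ℝ) < x := hx
      have : 0 < a / (b * x) := by positivity
      exact this
    · intro hy
      have hy0 : (0:ℝ) < y := hy
      refine ⟨a / (b * y), mem_Ioi.2 (by positivity), ?_⟩
      show a / (b * (a / (b * y))) = y
      field_simp
  have cov := integral_image_eq_integral_abs_deriv_smul measurableSet_Ioi hderiv hinj
    (fun y => Real.exp (-(a/y + b*y)) / (y * Real.sqrt y))
  rw [himg] at cov
  rw [cov]
  rw [← integral_const_mul]
  apply setIntegral_congr_fun measurableSet_Ioi
  intro x hx
  have hx0 : (0:ℝ) < x := hx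
  have hsx := Real.sqrt_pos.2 hx0
  dsimp only [hf, hf']
  have h1 : a / (a / (b * x)) = b * x := by field_simp
  have h2 : b * (a / (b * x)) = a / x := by
    field_simp
  rw [smul_eq_mul, h1, h2]
  have h3 : Real.sqrt (a / (b * x)) = Real.sqrt a / (Real.sqrt b * Real.sqrt x) := by
    rw [Real.sqrt_div ha.le, Real.sqrt_mul hb.le]
  have h4 : |(-(a * b) / (b * x) ^ 2)| = a / (b * x^2) := by
    rw [abs_div, abs_neg, abs_of_pos (by positivity), abs_of_pos (by positivity)]
    rw [mul_pow]
    field_simp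
  rw [h4, h3]
  have hxx : Real.sqrt x * Real.sqrt x = x := Real.mul_self_sqrt hx0.le
  rw [show b * x + a / x = a / x + b * x by ring]
  set Ex := Real.exp (-(a/x + b*x)) with hEx
  rw [show f x = a/(b*x) from rfl]
  field_simp
  linear_combination Ex*hxx

lemma lemIval (a b : ℝ) (ha : 0 < a) (hb : 0 < b) :
    ∫ x in Ioi (0:ℝ), Real.exp (-(a/x + b*x)) / Real.sqrt x
      = Real.sqrt π / Real.sqrt b * Real.exp (-(2*Real.sqrt (a*b))) := by
  have hsa := Real.sqrt_pos.2 ha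
  have hsb := Real.sqrt_pos.2 hb
  have hsplit : ∫ x in Ioi (0:ℝ), phi' a b x * Real.exp (-(a/x + b*x))
      = ∫ x in Ioi (0:ℝ), (Real.sqrt b / 2 * (Real.exp (-(a/x + b*x)) / Real.sqrt x)
        + Real.sqrt a / 2 * (Real.exp (-(a/x + b*x)) / (x * Real.sqrt x))) := by
    apply setIntegral_congr_fun measurableSet_Ioi
    intro x hx
    have hx0 : (0:ℝ) < x := hx
    have hsx := Real.sqrt_pos.2 hx0
    unfold phi'
    field_simp
  rw [lemL a b ha hb] at hsplit
  rw [integral_add ((intI a b ha hb).const_mul _) ((intJ a b ha hb).const_mul _)] at hsplit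
  rw [integral_const_mul, integral_const_mul, lemSwap a b ha hb] at hsplit
  set I := ∫ x in Ioi (0:ℝ), Real.exp (-(a/x + b*x)) / Real.sqrt x with hI
  have key : Real.sqrt π * Real.exp (-(2*Real.sqrt (a*b))) = Real.sqrt b * I := by
    rw [hsplit]
    field_simp
    ring
  rw [eq_comm, div_mul_eq_mul_div, div_eq_iff hsb.ne', mul_comm I (Real.sqrt b), ← key]

lemma lemJval (a b : ℝ) (ha : 0 < a) (hb : 0 < b) :
    ∫ x in Ioi (0:ℝ), Real.exp (-(a/x + b*x)) / (x * Real.sqrt x)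
      = Real.sqrt π / Real.sqrt a * Real.exp (-(2*Real.sqrt (a*b))) := by
  have hsa := Real.sqrt_pos.2 ha
  have hsb := Real.sqrt_pos.2 hb
  rw [lemSwap a b ha hb, lemIval a b ha hb]
  field_simp

lemma density_eq (μ lam : ℝ) (hμ : 0 < μ) (hlam : 0 < lam) {w : ℝ} (hw : 0 < w) :
    Real.sqrt (lam / (2 * Real.pi * w ^ 3)) * Real.exp (-lam * (w - μ) ^ 2 / (2 * μ ^ 2 * w))
      = (Real.sqrt (lam / (2 * Real.pi)) * Real.exp (lam / μ))
        * (Real.exp (-((lam/2)/w + (lam/(2*μ^2))*w)) / (w * Real.sqrt w)) := by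
  have hπ := Real.pi_pos
  have h1 : lam / (2 * Real.pi * w ^ 3) = (lam / (2 * Real.pi)) / w ^ 3 := by
    rw [div_div]
  have h2 : Real.sqrt (w ^ 3) = w * Real.sqrt w := by
    rw [pow_succ, Real.sqrt_mul (sq_nonneg w), Real.sqrt_sq hw.le]
  have h3 : Real.sqrt (lam / (2 * Real.pi * w ^ 3))
      = Real.sqrt (lam / (2 * Real.pi)) / (w * Real.sqrt w) := by
    rw [h1, Real.sqrt_div (by positivity) (w^3), h2]
  have h4 : -lam * (w - μ) ^ 2 / (2 * μ ^ 2 * w)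
      = lam / μ + -((lam/2)/w + (lam/(2*μ^2))*w) := by
    field_simp
    ring
  rw [h3, h4, Real.exp_add]
  ring

lemma sqrt_ab (μ lam : ℝ) (hμ : 0 < μ) (hlam : 0 < lam) :
    Real.sqrt (lam/2 * (lam/(2*μ^2))) = lam / (2*μ) := by
  rw [show lam/2 * (lam/(2*μ^2)) = (lam/(2*μ))^2 by field_simp]
  exact Real.sqrt_sq (by positivity)

lemma sqrt_coef (μ lam : ℝ) (hμ : 0 < μ) (hlam : 0 < lam) :
    Real.sqrt (lam / (2 * Real.pi)) * Real.sqrt π = Real.sqrt (lam / 2) := by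
  have hπ := Real.pi_pos
  rw [← Real.sqrt_mul (by positivity)]
  congr 1
  field_simp

lemma ig_norm (μ lam : ℝ) (hμ : 0 < μ) (hlam : 0 < lam) :
    ∫ w in Ioi (0:ℝ),
      Real.sqrt (lam / (2 * Real.pi * w ^ 3)) * Real.exp (-lam * (w - μ) ^ 2 / (2 * μ ^ 2 * w)) = 1 := by
  have hπ := Real.pi_pos
  have ha : (0:ℝ) < lam/2 := by positivity
  have hb : (0:ℝ) < lam/(2*μ^2) := by positivity
  rw [setIntegral_congr_fun measurableSet_Ioi
    (fun w hw => density_eq μ lam hμ hlam (mem_Ioi.1 hw))]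
  rw [integral_const_mul, lemJval _ _ ha hb, sqrt_ab μ lam hμ hlam]
  rw [show Real.sqrt π / Real.sqrt (lam/2) * Real.exp (-(2*(lam/(2*μ))))
    = Real.sqrt π * Real.exp (-(2*(lam/(2*μ)))) / Real.sqrt (lam/2) by ring]
  rw [show Real.sqrt (lam / (2 * Real.pi)) * Real.exp (lam / μ)
      * (Real.sqrt π * Real.exp (-(2*(lam/(2*μ)))) / Real.sqrt (lam/2))
    = (Real.sqrt (lam / (2 * Real.pi)) * Real.sqrt π) / Real.sqrt (lam/2)
      * (Real.exp (lam / μ) * Real.exp (-(2*(lam/(2*μ))))) by ring]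
  rw [sqrt_coef μ lam hμ hlam, div_self (Real.sqrt_pos.2 ha).ne', ← Real.exp_add]
  rw [show lam/μ + -(2*(lam/(2*μ))) = 0 by field_simp; ring]
  simp

lemma ig_mean (μ lam : ℝ) (hμ : 0 < μ) (hlam : 0 < lam) :
    ∫ w in Ioi (0:ℝ),
      w * (Real.sqrt (lam / (2 * Real.pi * w ^ 3)) * Real.exp (-lam * (w - μ) ^ 2 / (2 * μ ^ 2 * w))) = μ := by
  have hπ := Real.pi_pos
  have ha : (0:ℝ) < lam/2 := by positivity
  have hb : (0:ℝ) < lam/(2*μ^2) := by positivity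
  have hcongr : ∀ w ∈ Ioi (0:ℝ),
      w * (Real.sqrt (lam / (2 * Real.pi * w ^ 3)) * Real.exp (-lam * (w - μ) ^ 2 / (2 * μ ^ 2 * w)))
      = (Real.sqrt (lam / (2 * Real.pi)) * Real.exp (lam / μ))
        * (Real.exp (-((lam/2)/w + (lam/(2*μ^2))*w)) / Real.sqrt w) := by
    intro w hw
    have hw0 : (0:ℝ) < w := hw
    have hsw := Real.sqrt_pos.2 hw0
    rw [density_eq μ lam hμ hlam hw0]
    field_simp
  rw [setIntegral_congr_fun measurableSet_Ioi hcongr]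
  rw [integral_const_mul, lemIval _ _ ha hb, sqrt_ab μ lam hμ hlam]
  rw [show Real.sqrt (lam / (2 * Real.pi)) * Real.exp (lam / μ)
      * (Real.sqrt π / Real.sqrt (lam/(2*μ^2)) * Real.exp (-(2*(lam/(2*μ)))))
    = (Real.sqrt (lam / (2 * Real.pi)) * Real.sqrt π) / Real.sqrt (lam/(2*μ^2))
      * (Real.exp (lam / μ) * Real.exp (-(2*(lam/(2*μ))))) by ring]
  rw [sqrt_coef μ lam hμ hlam, ← Real.exp_add]
  rw [show lam/μ + -(2*(lam/(2*μ))) = 0 by field_simp; ring]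
  rw [← Real.sqrt_div ha.le]
  rw [show (lam/2) / (lam/(2*μ^2)) = μ^2 by field_simp]
  rw [Real.sqrt_sq hμ.le]
  simp

lemma ig_int (μ lam : ℝ) (hμ : 0 < μ) (hlam : 0 < lam) :
    IntegrableOn (fun w =>
      Real.sqrt (lam / (2 * Real.pi * w ^ 3)) * Real.exp (-lam * (w - μ) ^ 2 / (2 * μ ^ 2 * w))) (Ioi (0:ℝ)) := by
  have hπ := Real.pi_pos
  have ha : (0:ℝ) < lam/2 := by positivity
  have hb : (0:ℝ) < lam/(2*μ^2) := by positivity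
  have h : IntegrableOn (fun w => (Real.sqrt (lam / (2 * Real.pi)) * Real.exp (lam / μ))
      * (Real.exp (-((lam/2)/w + (lam/(2*μ^2))*w)) / (w * Real.sqrt w))) (Ioi (0:ℝ)) :=
    (intJ (lam/2) (lam/(2*μ^2)) ha hb).const_mul _
  apply h.congr_fun _ measurableSet_Ioi
  intro w hw
  exact (density_eq μ lam hμ hlam (mem_Ioi.1 hw)).symm

lemma ig_int_mean (μ lam : ℝ) (hμ : 0 < μ) (hlam : 0 < lam) :
    IntegrableOn (fun w =>
      w * (Real.sqrt (lam / (2 * Real.pi * w ^ 3)) * Real.exp (-lam * (w - μ) ^ 2 / (2 * μ ^ 2 * w)))) (Ioi (0:ℝ)) := by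
  have hπ := Real.pi_pos
  have ha : (0:ℝ) < lam/2 := by positivity
  have hb : (0:ℝ) < lam/(2*μ^2) := by positivity
  have h : IntegrableOn (fun w => (Real.sqrt (lam / (2 * Real.pi)) * Real.exp (lam / μ))
      * (Real.exp (-((lam/2)/w + (lam/(2*μ^2))*w)) / Real.sqrt w)) (Ioi (0:ℝ)) :=
    (intI (lam/2) (lam/(2*μ^2)) ha hb).const_mul _
  apply h.congr_fun _ measurableSet_Ioi
  intro w hw
  have hw0 : (0:ℝ) < w := hw
  have hsw := Real.sqrt_pos.2 hw0
  dsimp only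
  rw [density_eq μ lam hμ hlam hw0]
  field_simp

theorem kl_inverseGaussian (μ₁ μ₂ lam : ℝ) (h₁ : 0 < μ₁) (h₂ : 0 < μ₂) (hlam : 0 < lam) :
    ∫ w in Set.Ioi (0 : ℝ),
        Real.log
            ((Real.sqrt (lam / (2 * Real.pi * w ^ 3)) *
                Real.exp (-lam * (w - μ₁) ^ 2 / (2 * μ₁ ^ 2 * w))) /
              (Real.sqrt (lam / (2 * Real.pi * w ^ 3)) *
                Real.exp (-lam * (w - μ₂) ^ 2 / (2 * μ₂ ^ 2 * w)))) *
          (Real.sqrt (lam / (2 * Real.pi * w ^ 3)) *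
            Real.exp (-lam * (w - μ₁) ^ 2 / (2 * μ₁ ^ 2 * w)))
      = lam * (μ₁ - μ₂) ^ 2 / (2 * μ₁ * μ₂ ^ 2) := by
  have hπ := Real.pi_pos
  set A := lam/2*(1/μ₂^2 - 1/μ₁^2) with hA
  set B := lam*(1/μ₁ - 1/μ₂) with hB
  have hcongr : ∀ w ∈ Ioi (0:ℝ),
      Real.log
            ((Real.sqrt (lam / (2 * Real.pi * w ^ 3)) *
                Real.exp (-lam * (w - μ₁) ^ 2 / (2 * μ₁ ^ 2 * w))) /
              (Real.sqrt (lam / (2 * Real.pi * w ^ 3)) *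
                Real.exp (-lam * (w - μ₂) ^ 2 / (2 * μ₂ ^ 2 * w)))) *
          (Real.sqrt (lam / (2 * Real.pi * w ^ 3)) *
            Real.exp (-lam * (w - μ₁) ^ 2 / (2 * μ₁ ^ 2 * w)))
      = A * (w * (Real.sqrt (lam / (2 * Real.pi * w ^ 3)) *
            Real.exp (-lam * (w - μ₁) ^ 2 / (2 * μ₁ ^ 2 * w))))
        + B * (Real.sqrt (lam / (2 * Real.pi * w ^ 3)) *
            Real.exp (-lam * (w - μ₁) ^ 2 / (2 * μ₁ ^ 2 * w))) := by
    intro w hw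
    have hw0 : (0:ℝ) < w := hw
    have hc : 0 < Real.sqrt (lam / (2 * Real.pi * w ^ 3)) := Real.sqrt_pos.2 (by positivity)
    rw [mul_div_mul_left _ _ hc.ne', ← Real.exp_sub, Real.log_exp]
    have hkey : -lam * (w - μ₁) ^ 2 / (2 * μ₁ ^ 2 * w) - -lam * (w - μ₂) ^ 2 / (2 * μ₂ ^ 2 * w)
        = A * w + B := by
      rw [hA, hB]
      field_simp
      ring
    rw [hkey]
    ring
  rw [setIntegral_congr_fun measurableSet_Ioi hcongr]
  rw [integral_add ((ig_int_mean μ₁ lam h₁ hlam).const_mul A) ((ig_int μ₁ lam h₁ hlam).const_mul B)]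
  rw [integral_const_mul, integral_const_mul, ig_mean μ₁ lam h₁ hlam, ig_norm μ₁ lam h₁ hlam]
  rw [hA, hB]
  field_simp
  ring
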